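/- Let α, β > 0 and γ ≥ 0, and let (u,f) be a twice continuously differentiable solution on (0,∞) of u'' = (αβ/2) f² u + u(u²−1)/r² and f'' = −(2/r) f' + (β/r²) f u² + γ f(f²−1), with 0 < u(r) < 1 and 0 < f(r) < 1 for all r > 0 and lim_{r→∞} u(r) = 0, lim_{r→∞} f(r) = 1. Then for every ε ∈ (0,1) there exist constants C > 0 and R > 0 such that u(r) ≤ C·exp(−√(αβ/2)·(1−ε)·r) for all r ≥ R. -/

import Mathlib

open MeasureTheory Filter Set Topology

noncomputable section

/-- `(u,f)` is a (twice continuously differentiable) classical solution on `(0,∞)` of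
`u'' = (αβ/2) f² u + u(u²−1)/r²` and `f'' = −(2/r) f' + (β/r²) f u² + γ f(f²−1)`,
with first derivatives `u'`, `f'`. -/
def SolvesODE (α β γ : ℝ) (u u' f f' : ℝ → ℝ) : Prop :=
  ∀ r : ℝ, 0 < r →
    HasDerivAt u (u' r) r ∧ HasDerivAt f (f' r) r ∧
    HasDerivAt u' (α * β / 2 * f r ^ 2 * u r + u r * (u r ^ 2 - 1) / r ^ 2) r ∧
    HasDerivAt f' (-(2 / r) * f' r + β / r ^ 2 * f r * u r ^ 2
        + γ * f r * (f r ^ 2 - 1)) r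

set_option maxHeartbeats 800000 in
/-- exponential decay of `u` at infinity:
`u(r) ≤ C exp(−√(αβ/2)(1−ε) r)` for `r` large. -/
theorem u_exponential_decay (α β γ : ℝ) (hα : 0 < α) (hβ : 0 < β) (hγ : 0 ≤ γ)
    (u u' f f' : ℝ → ℝ) (hsol : SolvesODE α β γ u u' f f')
    (hu01 : ∀ r : ℝ, 0 < r → 0 < u r ∧ u r < 1)
    (hf01 : ∀ r : ℝ, 0 < r → 0 < f r ∧ f r < 1)
    (huinf : Tendsto u atTop (𝓝 0))
    (hfinf : Tendsto f atTop (𝓝 1)) :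
    ∀ ε : ℝ, 0 < ε → ε < 1 →
      ∃ C > (0 : ℝ), ∃ R > (0 : ℝ), ∀ r : ℝ, R ≤ r →
        u r ≤ C * Real.exp (-(Real.sqrt (α * β / 2) * (1 - ε) * r)) := by
  intro ε hε0 hε1
  have ha : (0:ℝ) < α * β / 2 := by positivity
  set a := α * β / 2 with ha_def
  set k := Real.sqrt a * (1 - ε) with hk_def
  have hsq : Real.sqrt a ^ 2 = a := Real.sq_sqrt ha.le
  have hk : 0 < k := mul_pos (Real.sqrt_pos.mpr ha) (by linarith)
  have hk2 : k ^ 2 = a * (1 - ε) ^ 2 := by rw [hk_def, mul_pow, hsq]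
  -- Step 1: find R with the key pointwise inequality
  have h1e : (1-ε)^2 < 1 := by nlinarith
  have hδ : 0 < a * ((((1-ε)^2 + 1)/2) - (1-ε)^2) :=
    mul_pos ha (by linarith)
  have hf2 : Tendsto (fun r => f r ^ 2) atTop (𝓝 1) := by
    have h := hfinf.pow 2
    simpa using h
  have h1 : ∀ᶠ r in atTop, ((1-ε)^2 + 1)/2 < f r ^ 2 :=
    hf2.eventually (eventually_gt_nhds (by nlinarith [h1e]))
  have h2 : ∀ᶠ r in atTop, 1 / r ^ 2 ≤ a * ((((1-ε)^2 + 1)/2) - (1-ε)^2) := by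
    have h3 : Tendsto (fun r : ℝ => 1 / r ^ 2) atTop (𝓝 0) := by
      simpa [one_div, Function.comp_def] using
        tendsto_inv_atTop_zero.comp (tendsto_pow_atTop (two_ne_zero) : Tendsto (fun r : ℝ => r ^ 2) atTop atTop)
    exact h3.eventually (eventually_le_nhds hδ)
  obtain ⟨R0, hR0⟩ := eventually_atTop.mp (h1.and h2)
  set R := max R0 1 with hR_def
  have hR1 : (1:ℝ) ≤ R := le_max_right _ _
  have hRpos : 0 < R := lt_of_lt_of_le one_pos hR1
  have hrpos : ∀ r : ℝ, R ≤ r → 0 < r := fun r hr => lt_of_lt_of_le hRpos hr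
  have hkey : ∀ r : ℝ, R ≤ r →
      k ^ 2 * u r ≤ a * f r ^ 2 * u r + u r * (u r ^ 2 - 1) / r ^ 2 := by
    intro r hr
    have hrp := hrpos r hr
    obtain ⟨hu0, hu1⟩ := hu01 r hrp
    obtain ⟨hfr, hir⟩ := hR0 r (le_trans (le_max_left _ _) hr)
    have hr2 : (0:ℝ) < r ^ 2 := by positivity
    have e1 : -(1 / r ^ 2) ≤ (u r ^ 2 - 1) / r ^ 2 := by
      rw [← neg_div]
      exact (div_le_div_iff_of_pos_right hr2).mpr (by nlinarith [sq_nonneg (u r)])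
    have e2 : a * (((1-ε)^2+1)/2) ≤ a * f r ^ 2 :=
      mul_le_mul_of_nonneg_left hfr.le ha.le
    have e3 : a * ((((1-ε)^2+1)/2) - (1-ε)^2) = a * (((1-ε)^2+1)/2) - a * (1-ε)^2 := by ring
    have hX : k ^ 2 ≤ a * f r ^ 2 + (u r ^ 2 - 1) / r ^ 2 := by
      rw [hk2]; linarith
    calc k ^ 2 * u r ≤ (a * f r ^ 2 + (u r ^ 2 - 1) / r ^ 2) * u r :=
          mul_le_mul_of_nonneg_right hX hu0.le
      _ = a * f r ^ 2 * u r + u r * (u r ^ 2 - 1) / r ^ 2 := by ring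
  -- derivative facts
  have hu'D : ∀ r : ℝ, 0 < r → HasDerivAt u (u' r) r := fun r hr => (hsol r hr).1
  have hu''D : ∀ r : ℝ, 0 < r →
      HasDerivAt u' (a * f r ^ 2 * u r + u r * (u r ^ 2 - 1) / r ^ 2) r :=
    fun r hr => (hsol r hr).2.2.1
  have hpD : ∀ r : ℝ, 0 < r → HasDerivAt (fun s => u' s + k * u s)
      (a * f r ^ 2 * u r + u r * (u r ^ 2 - 1) / r ^ 2 + k * u' r) r :=
    fun r hr => (hu''D r hr).add ((hu'D r hr).const_mul k)
  have hgD : ∀ r : ℝ, 0 < r → HasDerivAt (fun s => Real.exp (-k*s) * (u' s + k * u s))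
      (Real.exp (-k*r) * (-k) * (u' r + k * u r)
        + Real.exp (-k*r) * (a * f r ^ 2 * u r + u r * (u r ^ 2 - 1) / r ^ 2 + k * u' r)) r := by
    intro r hr
    have hlin : HasDerivAt (fun s : ℝ => -k * s) (-k) r := by
      simpa using (hasDerivAt_id r).const_mul (-k)
    exact hlin.exp.mul (hpD r hr)
  have hgmono : MonotoneOn (fun s => Real.exp (-k*s) * (u' s + k * u s)) (Ici R) := by
    apply monotoneOn_of_deriv_nonneg (convex_Ici R)
    · intro x hx
      exact (hgD x (hrpos x hx)).continuousAt.continuousWithinAt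
    · rw [interior_Ici]
      intro x hx
      exact (hgD x (hrpos x (le_of_lt hx))).differentiableAt.differentiableWithinAt
    · intro x hx
      rw [interior_Ici] at hx
      rw [(hgD x (hrpos x hx.le)).deriv]
      have hkey' := hkey x hx.le
      have heq : Real.exp (-k*x) * (-k) * (u' x + k * u x)
          + Real.exp (-k*x) * (a * f x ^ 2 * u x + u x * (u x ^ 2 - 1) / x ^ 2 + k * u' x)
          = Real.exp (-k*x) * ((a * f x ^ 2 * u x + u x * (u x ^ 2 - 1) / x ^ 2) - k ^ 2 * u x) := by
        ring
      rw [heq]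
      exact mul_nonneg (Real.exp_pos _).le (by linarith)
  by_cases hcase : ∀ r, R ≤ r → u' r + k * u r ≤ 0
  · -- decay case
    refine ⟨Real.exp (k*R), Real.exp_pos _, R, hRpos, ?_⟩
    have hGD : ∀ r : ℝ, 0 < r → HasDerivAt (fun s => Real.exp (k*s) * u s)
        (Real.exp (k*r) * k * u r + Real.exp (k*r) * u' r) r := by
      intro r hr
      have hlin : HasDerivAt (fun s : ℝ => k * s) k r := by
        simpa using (hasDerivAt_id r).const_mul k
      exact hlin.exp.mul (hu'D r hr)
    have hGanti : AntitoneOn (fun s => Real.exp (k*s) * u s) (Ici R) := by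
      apply antitoneOn_of_deriv_nonpos (convex_Ici R)
      · intro x hx
        exact (hGD x (hrpos x hx)).continuousAt.continuousWithinAt
      · rw [interior_Ici]
        intro x hx
        exact (hGD x (hrpos x (le_of_lt hx))).differentiableAt.differentiableWithinAt
      · intro x hx
        rw [interior_Ici] at hx
        rw [(hGD x (hrpos x hx.le)).deriv]
        have hcx := hcase x hx.le
        have heq : Real.exp (k*x) * k * u x + Real.exp (k*x) * u' x
            = Real.exp (k*x) * (u' x + k * u x) := by ring
        rw [heq]
        exact mul_nonpos_of_nonneg_of_nonpos (Real.exp_pos _).le hcx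
    intro r hr
    have hG : Real.exp (k*r) * u r ≤ Real.exp (k*R) * u R :=
      hGanti self_mem_Ici hr hr
    have hu1 := (hu01 R hRpos).2
    have h3 : Real.exp (k*r) * u r ≤ Real.exp (k*R) := by
      nlinarith [Real.exp_pos (k*R)]
    rw [Real.exp_neg, ← div_eq_mul_inv, le_div_iff₀ (Real.exp_pos _)]
    calc u r * Real.exp (k*r) = Real.exp (k*r) * u r := by ring
      _ ≤ Real.exp (k*R) := h3
  · -- contradiction case
    exfalso
    push_neg at hcase
    obtain ⟨r0, hr0R, hp0⟩ := hcase
    set c := Real.exp (-k*r0) * (u' r0 + k * u r0) with hc_def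
    have hc : 0 < c := mul_pos (Real.exp_pos _) hp0
    have hpr : ∀ r, r0 ≤ r → c * Real.exp (k*r) ≤ u' r + k * u r := by
      intro r hr
      have h := hgmono (show r0 ∈ Ici R from hr0R) (show r ∈ Ici R from le_trans hr0R hr) hr
      have he := (Real.exp_pos (k*r)).le
      calc c * Real.exp (k*r)
          ≤ (Real.exp (-k*r) * (u' r + k * u r)) * Real.exp (k*r) :=
            mul_le_mul_of_nonneg_right h he
        _ = (u' r + k * u r) * Real.exp (-k*r + k*r) := by rw [Real.exp_add]; ring
        _ = u' r + k * u r := by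
            rw [show -k*r + k*r = 0 by ring, Real.exp_zero, mul_one]
    set r1 := max r0 (Real.log ((k+1)/c) / k) with hr1_def
    have hr1r0 : r0 ≤ r1 := le_max_left _ _
    have hr1pos : 0 < r1 := lt_of_lt_of_le (hrpos r0 hr0R) hr1r0
    have hu'ge : ∀ r, r1 ≤ r → 1 ≤ u' r := by
      intro r hr
      have hrr0 : r0 ≤ r := le_trans hr1r0 hr
      have h := hpr r hrr0
      have hlog : Real.log ((k+1)/c) / k ≤ r := le_trans (le_max_right _ _) hr
      have hlog2 : Real.log ((k+1)/c) ≤ k * r := by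
        rw [div_le_iff₀ hk] at hlog
        linarith [hlog]
      have hexp : (k+1)/c ≤ Real.exp (k*r) := by
        rw [← Real.exp_log (show (0:ℝ) < (k+1)/c by positivity)]
        exact Real.exp_le_exp.mpr hlog2
      have h2 : k + 1 ≤ c * Real.exp (k*r) := by
        rw [div_le_iff₀ hc] at hexp
        calc k + 1 ≤ Real.exp (k*r) * c := hexp
          _ = c * Real.exp (k*r) := mul_comm _ _
      have hu1 := (hu01 r (lt_of_lt_of_le hr1pos hr)).2
      have hu0 := (hu01 r (lt_of_lt_of_le hr1pos hr)).1
      have e4 : k * u r ≤ k * 1 := mul_le_mul_of_nonneg_left hu1.le hk.le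
      linarith
    have hmono : MonotoneOn (fun s => u s - s) (Ici r1) := by
      apply monotoneOn_of_deriv_nonneg (convex_Ici r1)
      · intro x hx
        have hD : HasDerivAt (fun s => u s - s) (u' x - 1) x :=
          (hu'D x (lt_of_lt_of_le hr1pos hx)).sub (hasDerivAt_id x)
        exact hD.continuousAt.continuousWithinAt
      · rw [interior_Ici]
        intro x hx
        have hD : HasDerivAt (fun s => u s - s) (u' x - 1) x :=
          (hu'D x (lt_of_lt_of_le hr1pos (le_of_lt hx))).sub (hasDerivAt_id x)
        exact hD.differentiableAt.differentiableWithinAt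
      · intro x hx
        rw [interior_Ici] at hx
        have hD : HasDerivAt (fun s => u s - s) (u' x - 1) x :=
          (hu'D x (lt_of_lt_of_le hr1pos hx.le)).sub (hasDerivAt_id x)
        rw [hD.deriv]
        linarith [hu'ge x hx.le]
    have hfin : u r1 - r1 ≤ u (r1+1) - (r1+1) :=
      hmono self_mem_Ici (show r1 + 1 ∈ Ici r1 by simp) (by linarith)
    have h5 := (hu01 (r1+1) (by linarith)).2
    have h6 := (hu01 r1 hr1pos).1
    linarith
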